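/- Concentration of the empirical norm of a fixed matrix around its L2(Π) norm: For any fixed matrix A ∈ ℝ^{m1×m2} with ‖A‖_∞ ≤ 2a and any t > 0, P( |‖𝒳(A)‖₂ − ‖A‖_{L2(Π)}| > t + 48a ) ≤ 4·exp( −t²/(8a²) ). -/

import Mathlib

open MeasureTheory ProbabilityTheory

/-- Squared Frobenius norm of a real matrix. -/
noncomputable def frob2 {m1 m2 : ℕ} (A : Matrix (Fin m1) (Fin m2) ℝ) : ℝ :=
  ∑ i, ∑ j, (A i j) ^ 2

/-- Frobenius norm of a real matrix. -/
noncomputable def frob {m1 m2 : ℕ} (A : Matrix (Fin m1) (Fin m2) ℝ) : ℝ :=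
  Real.sqrt (frob2 A)

/-- `(Aᵀ * A)` is Hermitian for a real matrix (lemma removed from Mathlib). -/
theorem Matrix.isHermitian_transpose_mul_self {m1 m2 : ℕ} (A : Matrix (Fin m1) (Fin m2) ℝ) :
    (A.transpose * A).IsHermitian := by
  simpa using Matrix.isHermitian_conjTranspose_mul_self A

/-- Nuclear (trace) norm of a real matrix: sum of its singular values. -/
noncomputable def nucNorm {m1 m2 : ℕ} (A : Matrix (Fin m1) (Fin m2) ℝ) : ℝ :=
  ∑ i, Real.sqrt ((Matrix.isHermitian_transpose_mul_self A).eigenvalues i)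

/-- Operator (spectral) norm of a real matrix. -/
noncomputable def opNorm {m1 m2 : ℕ} (A : Matrix (Fin m1) (Fin m2) ℝ) : ℝ :=
  ⨆ v : {v : Fin m2 → ℝ // ∑ j, (v j) ^ 2 ≤ 1}, Real.sqrt (∑ i, (A.mulVec v.1 i) ^ 2)

/-- Matrix scalar product ⟨A,B⟩ = tr(AᵀB). -/
noncomputable def mdot {m1 m2 : ℕ} (A B : Matrix (Fin m1) (Fin m2) ℝ) : ℝ :=
  ∑ i, ∑ j, A i j * B i j

/-- Entrywise multiplication by a realized sampling pattern `B0`; this models the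
observation operator 𝒳 for one realization of the Bernoulli masks. -/
noncomputable def hadB {m1 m2 : ℕ} (B0 A : Matrix (Fin m1) (Fin m2) ℝ) :
    Matrix (Fin m1) (Fin m2) ℝ :=
  Matrix.of fun i j => B0 i j * A i j

/-- The entries of `B` are i.i.d. Bernoulli(p) random variables (taking values 0/1). -/
def IsBernoulliMatrix {m1 m2 : ℕ} {Ω : Type} [MeasurableSpace Ω] (P : Measure Ω)
    (B : Ω → Matrix (Fin m1) (Fin m2) ℝ) (p : ℝ) : Prop :=
  (∀ i j, Measurable fun ω => B ω i j) ∧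
  (∀ ω i j, B ω i j = 0 ∨ B ω i j = 1) ∧
  (∀ i j, P {ω | B ω i j = 1} = ENNReal.ofReal p) ∧
  iIndepFun (fun q : Fin m1 × Fin m2 => fun ω => B ω q.1 q.2) P

/-- The noise entries are measurable, centered, with variance σ², and bounded by U a.s. -/
def IsBoundedNoise {m1 m2 : ℕ} {Ω : Type} [MeasurableSpace Ω] (P : Measure Ω)
    (E : Ω → Matrix (Fin m1) (Fin m2) ℝ) (σ U : ℝ) : Prop :=
  (∀ i j, Measurable fun ω => E ω i j) ∧
  (∀ i j, ∫ ω, E ω i j ∂P = 0) ∧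
  (∀ i j, ∫ ω, (E ω i j) ^ 2 ∂P = σ ^ 2) ∧
  (∀ i j, ∀ᵐ ω ∂P, |E ω i j| ≤ U)

/-- The entries of `e` are Rademacher (±1, fair) random variables. -/
def IsRademacherMatrix {m1 m2 : ℕ} {Ω : Type} [MeasurableSpace Ω] (P : Measure Ω)
    (e : Ω → Matrix (Fin m1) (Fin m2) ℝ) : Prop :=
  (∀ i j, Measurable fun ω => e ω i j) ∧
  (∀ ω i j, e ω i j = 1 ∨ e ω i j = -1) ∧
  (∀ i j, P {ω | e ω i j = 1} = 1 / 2)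

/-- The entries of `B` and `E` together form an independent family. -/
def JointlyIndep {m1 m2 : ℕ} {Ω : Type} [MeasurableSpace Ω] (P : Measure Ω)
    (B E : Ω → Matrix (Fin m1) (Fin m2) ℝ) : Prop :=
  iIndepFun
    (Sum.elim (fun q : Fin m1 × Fin m2 => fun ω => B ω q.1 q.2)
              (fun q : Fin m1 × Fin m2 => fun ω => E ω q.1 q.2)) P

/-- The class 𝒞(k,a): rank ≤ k, sup-norm ≤ a, and ‖M0−A‖₂² ≥ 256(a∨U)²zd/p. -/
def classC {m1 m2 : ℕ} (M0 : Matrix (Fin m1) (Fin m2) ℝ) (a U z p : ℝ) (k : ℕ) :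
    Set (Matrix (Fin m1) (Fin m2) ℝ) :=
  {A | (∀ i j, |A i j| ≤ a) ∧ 256 * (max a U) ^ 2 * z * (m1 + m2) / p ≤ frob2 (M0 - A) ∧
    A.rank ≤ k}

/-- 𝒞 = ∪_{k=1}^m 𝒞(k,a). -/
def classCfull {m1 m2 : ℕ} (M0 : Matrix (Fin m1) (Fin m2) ℝ) (a U z p : ℝ) :
    Set (Matrix (Fin m1) (Fin m2) ℝ) :=
  ⋃ k ∈ Finset.Icc 1 (min m1 m2), classC M0 a U z p k

/-- 𝒞(k,a,T) = {A ∈ 𝒞(k,a) : ‖M0−A‖₂ ≤ T}. -/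
def classCT {m1 m2 : ℕ} (M0 : Matrix (Fin m1) (Fin m2) ℝ) (a U z p : ℝ) (k : ℕ) (T : ℝ) :
    Set (Matrix (Fin m1) (Fin m2) ℝ) :=
  {A | A ∈ classC M0 a U z p k ∧ frob (M0 - A) ≤ T}

/-- 𝒟_δ(k,a,T) = {A : ‖A‖_∞ ≤ a, ‖A‖₂ ≤ δ, ‖A‖_* ≤ √k·T}. -/
def classD {m1 m2 : ℕ} (k : ℕ) (a δ T : ℝ) : Set (Matrix (Fin m1) (Fin m2) ℝ) :=
  {A | (∀ i j, |A i j| ≤ a) ∧ frob A ≤ δ ∧ nucNorm A ≤ Real.sqrt k * T}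

lemma exp_quad_up {x : ℝ} (h0 : 0 ≤ x) (h1 : x ≤ 1) :
    Real.exp x ≤ 1 + x + (3/4) * x ^ 2 := by
  have h := Real.exp_bound' h0 h1 (n := 2) (by norm_num)
  simp [Finset.sum_range_succ] at h
  nlinarith [h]

lemma exp_quad_down {x : ℝ} (h0 : 0 ≤ x) :
    Real.exp (-x) ≤ 1 - x + x ^ 2 / 2 := by
  rcases le_or_gt x 1 with h1 | h1
  · have hb := Real.exp_bound (x := -x) (by rw [abs_neg, abs_of_nonneg h0]; exact h1)
      (n := 4) (by norm_num)
    rw [abs_neg, abs_of_nonneg h0] at hb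
    have h2 := (abs_sub_le_iff.1 hb).1
    norm_num [Finset.sum_range_succ, Nat.factorial] at h2
    have hx4 : x ^ 4 ≤ x ^ 3 := by nlinarith [pow_nonneg h0 3]
    nlinarith [h2, hx4]
  · have h2 : Real.exp (-x) ≤ Real.exp (-1) := by
      apply Real.exp_le_exp.mpr; linarith
    have h3 : (2:ℝ) ≤ Real.exp 1 := by
      have := Real.add_one_le_exp (1:ℝ); linarith
    have h4 : Real.exp (-1) ≤ 1/2 := by
      rw [Real.exp_neg]
      rw [inv_le_comm₀ (Real.exp_pos 1) (by norm_num)] at *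
      · nlinarith [Real.exp_pos (1:ℝ)]
    nlinarith [h2, h4, sq_nonneg (x-1)]

set_option maxHeartbeats 2000000 in
/-- Concentration of the empirical norm ‖𝒳(A)‖₂ of a fixed matrix A (with ‖A‖_∞ ≤ 2a)
around its L2(Π)-norm √p‖A‖₂: P(|‖𝒳(A)‖₂ − ‖A‖_{L2(Π)}| > t + 48a) ≤ 4exp(−t²/(8a²)). -/
theorem empirical_norm_concentration (m1 m2 n : ℕ) (a p : ℝ)
    (Ω : Type) [MeasurableSpace Ω] (P : Measure Ω) [IsProbabilityMeasure P]
    (B : Ω → Matrix (Fin m1) (Fin m2) ℝ)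
    (hm1 : 0 < m1) (hm2 : 0 < m2) (hn : 0 < n) (hnle : n ≤ m1 * m2)
    (hp : p = (n : ℝ) / (m1 * m2)) (ha : 0 < a)
    (hB : IsBernoulliMatrix P B p)
    (A : Matrix (Fin m1) (Fin m2) ℝ) (hA : ∀ i j, |A i j| ≤ 2 * a)
    (t : ℝ) (ht : 0 < t) :
    P {ω | t + 48 * a < |frob (hadB (B ω) A) - Real.sqrt p * frob A|} ≤
      ENNReal.ofReal (4 * Real.exp (-t ^ 2 / (8 * a ^ 2))) := by
  obtain ⟨hmeasB, h01, hP1, hindep⟩ := hB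
  have hp0 : 0 < p := by
    rw [hp]; positivity
  set τ : ℝ := t + 48 * a with hτdef
  have hτpos : 0 < τ := by positivity
  have hτt : t ≤ τ := by nlinarith
  set M : ℝ := 4 * a ^ 2 with hMdef
  have hM : 0 < M := by positivity
  set c : Fin m1 × Fin m2 → ℝ := fun q => (A q.1 q.2) ^ 2 with hcdef
  have hc0 : ∀ q, 0 ≤ c q := fun q => sq_nonneg _
  have hcM : ∀ q, c q ≤ M := by
    intro q
    have := hA q.1 q.2
    have h2 : (A q.1 q.2) ^ 2 ≤ (2*a) ^ 2 := by
      rw [← sq_abs]; exact pow_le_pow_left₀ (abs_nonneg _) this 2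
    simpa [hcdef, hMdef] using by nlinarith [h2]
  set X : Fin m1 × Fin m2 → Ω → ℝ := fun q ω => B ω q.1 q.2 * c q with hXdef
  have hXmeas : ∀ q, Measurable (X q) := fun q => (hmeasB q.1 q.2).mul_const _
  have hXindep : iIndepFun X P :=
    hindep.comp (fun q x => x * c q) (fun q => measurable_mul_const (c q))
  set S : Ω → ℝ := fun ω => ∑ q : Fin m1 × Fin m2, X q ω with hSdef
  have hSmeas : Measurable S := Finset.measurable_sum _ (fun q _ => hXmeas q)
  have hB01 : ∀ (ω : Ω) (q : Fin m1 × Fin m2), (0:ℝ) ≤ B ω q.1 q.2 ∧ B ω q.1 q.2 ≤ 1 := by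
    intro ω q; rcases h01 ω q.1 q.2 with h | h <;> rw [h] <;> norm_num
  have hS0 : ∀ ω, 0 ≤ S ω := by
    intro ω; apply Finset.sum_nonneg; intro q _
    exact mul_nonneg (hB01 ω q).1 (hc0 q)
  have hSub : ∀ ω, S ω ≤ ∑ q, c q := by
    intro ω; apply Finset.sum_le_sum; intro q _
    calc B ω q.1 q.2 * c q ≤ 1 * c q :=
          mul_le_mul_of_nonneg_right (hB01 ω q).2 (hc0 q)
      _ = c q := one_mul _
  have hf2A : frob2 A = ∑ q : Fin m1 × Fin m2, c q := by
    simp [frob2, hcdef, Fintype.sum_prod_type]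
  set μ : ℝ := p * ∑ q : Fin m1 × Fin m2, c q with hμdef
  have hμ0 : 0 ≤ μ := by
    apply mul_nonneg hp0.le; exact Finset.sum_nonneg fun q _ => hc0 q
  have hSfr : ∀ ω, frob (hadB (B ω) A) = Real.sqrt (S ω) := by
    intro ω
    have : frob2 (hadB (B ω) A) = S ω := by
      simp only [frob2, hadB, Matrix.of_apply, hSdef, hXdef, hcdef,
        Fintype.sum_prod_type]
      apply Finset.sum_congr rfl; intro i _
      apply Finset.sum_congr rfl; intro j _
      rcases h01 ω i j with h | h <;> rw [h] <;> ring
    rw [frob, this]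
  set y : ℝ := Real.sqrt μ with hydef
  have hy0 : 0 ≤ y := Real.sqrt_nonneg _
  have hy2 : y ^ 2 = μ := Real.sq_sqrt hμ0
  have hfrA : Real.sqrt p * frob A = y := by
    rw [frob, hydef, hμdef, hf2A, Real.sqrt_mul hp0.le]
  -- integrability of exp(lam * S)
  have hint : ∀ lam : ℝ, Integrable (fun ω => Real.exp (lam * S ω)) P := by
    intro lam
    apply Integrable.mono' (integrable_const (Real.exp (|lam| * ∑ q, c q)))
    · exact (Real.measurable_exp.comp (hSmeas.const_mul lam)).aestronglyMeasurable
    · refine ae_of_all _ fun ω => ?_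
      rw [Real.norm_eq_abs, abs_of_pos (Real.exp_pos _)]
      apply Real.exp_le_exp.mpr
      calc lam * S ω ≤ |lam| * S ω :=
            mul_le_mul_of_nonneg_right (le_abs_self lam) (hS0 ω)
        _ ≤ |lam| * ∑ q, c q :=
            mul_le_mul_of_nonneg_left (hSub ω) (abs_nonneg lam)
  -- mgf of each coordinate
  have hmgf : ∀ (lam : ℝ) q, mgf (X q) P lam = 1 + p * (Real.exp (lam * c q) - 1) := by
    intro lam q
    have hs : MeasurableSet {ω | B ω q.1 q.2 = 1} :=
      (hmeasB q.1 q.2) (measurableSet_singleton 1)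
    have heq : (fun ω => Real.exp (lam * X q ω)) =
        fun ω => 1 + (Real.exp (lam * c q) - 1) *
          Set.indicator {ω | B ω q.1 q.2 = 1} (fun _ => (1:ℝ)) ω := by
      funext ω
      rcases h01 ω q.1 q.2 with h | h
      · have hω : ω ∉ {ω | B ω q.1 q.2 = 1} := by simp [h]
        simp [hXdef, h, Set.indicator_of_notMem hω]
      · have hω : ω ∈ {ω | B ω q.1 q.2 = 1} := h
        simp [hXdef, h, Set.indicator_of_mem hω]
    rw [mgf, heq, integral_add (integrable_const _)
      (((integrable_const (1:ℝ)).indicator hs).const_mul _),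
      integral_const, integral_const_mul, integral_indicator_const (1:ℝ) hs,
      measureReal_def P {ω | B ω q.1 q.2 = 1}, hP1 q.1 q.2]
    simp [ENNReal.toReal_ofReal hp0.le, mul_comm]
  have hSsum : S = ∑ q : Fin m1 × Fin m2, X q := by
    funext ω; simp [hSdef]
  have hmgfS : ∀ lam : ℝ, mgf S P lam = ∏ q, mgf (X q) P lam := by
    intro lam; rw [hSsum]; exact hXindep.mgf_sum hXmeas Finset.univ
  have hgen : ∀ u v : ℝ, ∑ q, p * (u * c q + v * (c q)^2)
      = u * (p * ∑ q, c q) + v * (p * ∑ q, (c q)^2) := by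
    intro u v
    simp only [Finset.mul_sum, ← Finset.sum_add_distrib]
    exact Finset.sum_congr rfl fun q _ => by ring
  have hc2sum : p * ∑ q, (c q)^2 ≤ M * (p * ∑ q, c q) := by
    simp only [Finset.mul_sum]
    apply Finset.sum_le_sum; intro q _
    have h1 := hcM q; have h2 := hc0 q
    nlinarith [mul_nonneg (mul_nonneg hp0.le h2) (sub_nonneg.2 h1)]
  have hprodbd : ∀ u v : ℝ, 0 ≤ v →
      (∀ q : Fin m1 × Fin m2, Real.exp (u * c q) ≤ 1 + (u * c q + v * (c q)^2)) →
      mgf S P u ≤ Real.exp (u * μ + v * (M * μ)) := by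
    intro u v hv hbd
    rw [hmgfS u]
    calc ∏ q, mgf (X q) P u
        ≤ ∏ q, Real.exp (p * (u * c q + v * (c q)^2)) := by
          apply Finset.prod_le_prod (fun q _ => mgf_nonneg)
          intro q _
          rw [hmgf u q]
          have hb : Real.exp (u * c q) - 1 ≤ u * c q + v * (c q)^2 := by
            linarith [hbd q]
          have h1 : 1 + p * (Real.exp (u * c q) - 1)
              ≤ 1 + p * (u * c q + v * (c q)^2) := by
            nlinarith [mul_le_mul_of_nonneg_left hb hp0.le]
          refine h1.trans ?_
          linarith [Real.add_one_le_exp (p * (u * c q + v * (c q)^2))]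
      _ = Real.exp (∑ q, p * (u * c q + v * (c q)^2)) := (Real.exp_sum _ _).symm
      _ ≤ Real.exp (u * μ + v * (M * μ)) := by
          apply Real.exp_le_exp.mpr
          rw [hgen u v, hμdef]
          nlinarith [mul_le_mul_of_nonneg_left hc2sum hv]
  have hup : ∀ lam s : ℝ, 0 ≤ lam → lam * M ≤ 1 →
      P {ω | μ + s ≤ S ω} ≤
        ENNReal.ofReal (Real.exp ((3/4) * lam^2 * M * μ - lam * s)) := by
    intro lam s hlam hlamM
    have hch := measure_ge_le_exp_mul_mgf (μ := P) (X := S) (μ + s) hlam (hint lam)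
    have hbound : mgf S P lam ≤ Real.exp (lam * μ + ((3/4) * lam^2) * (M * μ)) := by
      apply hprodbd lam ((3/4) * lam^2) (by positivity)
      intro q
      have hx0 : 0 ≤ lam * c q := mul_nonneg hlam (hc0 q)
      have hx1 : lam * c q ≤ 1 :=
        le_trans (mul_le_mul_of_nonneg_left (hcM q) hlam) hlamM
      nlinarith [exp_quad_up hx0 hx1]
    have h2 : (P {ω | μ + s ≤ S ω}).toReal
        ≤ Real.exp ((3/4) * lam^2 * M * μ - lam * s) := by
      refine hch.trans ?_
      calc Real.exp (-lam * (μ + s)) * mgf S P lam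
          ≤ Real.exp (-lam * (μ + s)) *
              Real.exp (lam * μ + ((3/4) * lam^2) * (M * μ)) :=
            mul_le_mul_of_nonneg_left hbound (Real.exp_pos _).le
        _ = Real.exp ((3/4) * lam^2 * M * μ - lam * s) := by
            rw [← Real.exp_add]; congr 1; ring
    calc P {ω | μ + s ≤ S ω}
        = ENNReal.ofReal (P {ω | μ + s ≤ S ω}).toReal :=
          (ENNReal.ofReal_toReal (measure_ne_top P _)).symm
      _ ≤ ENNReal.ofReal (Real.exp ((3/4) * lam^2 * M * μ - lam * s)) :=
          ENNReal.ofReal_le_ofReal h2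
  have hlow : ∀ lam ε : ℝ, 0 ≤ lam →
      P {ω | S ω ≤ ε} ≤
        ENNReal.ofReal (Real.exp (lam * ε - lam * μ + lam^2 * M * μ / 2)) := by
    intro lam ε hlam
    have hch := measure_le_le_exp_mul_mgf (μ := P) (X := S) (t := -lam) ε
      (neg_nonpos.mpr hlam) (hint (-lam))
    have hbound : mgf S P (-lam) ≤ Real.exp ((-lam) * μ + (lam^2 / 2) * (M * μ)) := by
      apply hprodbd (-lam) (lam^2 / 2) (by positivity)
      intro q
      have hx0 : 0 ≤ lam * c q := mul_nonneg hlam (hc0 q)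
      have he := exp_quad_down hx0
      have heq : (-lam) * c q = -(lam * c q) := by ring
      rw [heq]
      nlinarith [he]
    have h2 : (P {ω | S ω ≤ ε}).toReal
        ≤ Real.exp (lam * ε - lam * μ + lam^2 * M * μ / 2) := by
      refine hch.trans ?_
      calc Real.exp (-(-lam) * ε) * mgf S P (-lam)
          ≤ Real.exp (-(-lam) * ε) *
              Real.exp ((-lam) * μ + (lam^2 / 2) * (M * μ)) :=
            mul_le_mul_of_nonneg_left hbound (Real.exp_pos _).le
        _ = Real.exp (lam * ε - lam * μ + lam^2 * M * μ / 2) := by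
            rw [← Real.exp_add]; congr 1; ring
    calc P {ω | S ω ≤ ε}
        = ENNReal.ofReal (P {ω | S ω ≤ ε}).toReal :=
          (ENNReal.ofReal_toReal (measure_ne_top P _)).symm
      _ ≤ ENNReal.ofReal (Real.exp (lam * ε - lam * μ + lam^2 * M * μ / 2)) :=
          ENNReal.ofReal_le_ofReal h2
  -- event inclusion
  set sp : ℝ := 2 * y * τ + τ^2 with hspdef
  set sm : ℝ := τ * y with hsmdef
  have hincl : {ω | τ < |frob (hadB (B ω) A) - Real.sqrt p * frob A|} ⊆
      {ω | μ + sp ≤ S ω} ∪ {ω | S ω ≤ μ - sm} := by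
    intro ω hω
    simp only [Set.mem_setOf_eq] at hω
    rw [hSfr ω, hfrA] at hω
    have hu0 : 0 ≤ Real.sqrt (S ω) := Real.sqrt_nonneg _
    have hu2 : (Real.sqrt (S ω))^2 = S ω := Real.sq_sqrt (hS0 ω)
    set u : ℝ := Real.sqrt (S ω)
    rcases lt_abs.mp hω with h | h
    · left
      simp only [Set.mem_setOf_eq, hspdef]
      nlinarith [h, hu2, hy2, hy0, hτpos,
        mul_nonneg (by linarith : (0:ℝ) ≤ u - y - τ) (by linarith : (0:ℝ) ≤ u + y + τ)]
    · right
      simp only [Set.mem_setOf_eq, hsmdef]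
      have h' : τ < y - u := by linarith [h]
      nlinarith [hu2, hy2, hu0, hτpos, h',
        mul_nonneg (by linarith : (0:ℝ) ≤ y - τ - u) (by linarith : (0:ℝ) ≤ y - τ + u)]
  have hexpmono : ∀ e : ℝ, e ≤ -τ^2 / (8 * a^2) →
      Real.exp e ≤ Real.exp (-t^2 / (8 * a^2)) := by
    intro e he
    apply Real.exp_le_exp.mpr
    refine he.trans ?_
    rw [div_le_div_iff₀ (by positivity) (by positivity)]
    have h2 : t^2 ≤ τ^2 := by nlinarith [hτt, ht]
    nlinarith [mul_le_mul_of_nonneg_right h2 (by positivity : (0:ℝ) ≤ 8 * a^2)]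
  clear_value sm sp y μ S X c M τ
  by_cases hμz : μ = 0
  · have hcz : ∑ q, c q = 0 := by
      have h := hμz
      rw [hμdef] at h
      exact (mul_eq_zero.mp h).resolve_left hp0.ne'
    have hSz : ∀ ω, S ω = 0 := fun ω =>
      le_antisymm (by rw [← hcz]; exact hSub ω) (hS0 ω)
    have hyz : y = 0 := by rw [hydef, hμz, Real.sqrt_zero]
    have hev : {ω | τ < |frob (hadB (B ω) A) - Real.sqrt p * frob A|} = ∅ := by
      ext ω
      simp only [Set.mem_setOf_eq, Set.mem_empty_iff_false, iff_false, not_lt]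
      rw [hSfr ω, hfrA, hSz ω, hyz]
      simp [Real.sqrt_zero]
      positivity
    rw [hev]
    simp
  · have hμpos : 0 < μ := lt_of_le_of_ne hμ0 (Ne.symm hμz)
    have hypos : 0 < y := by rw [hydef]; exact Real.sqrt_pos.mpr hμpos
    have hsp0 : 0 ≤ sp := by rw [hspdef]; positivity
    have hupfinal : P {ω | μ + sp ≤ S ω} ≤
        ENNReal.ofReal (Real.exp (-t^2 / (8 * a^2))) := by
      by_cases hcase : sp ≤ (3/2) * μ
      · set lam : ℝ := 2 * sp / (3 * M * μ) with hlamdef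
        have hlam0 : 0 ≤ lam := by rw [hlamdef]; positivity
        have hlamM : lam * M ≤ 1 := by
          rw [hlamdef, div_mul_eq_mul_div, div_le_one (by positivity)]
          nlinarith [hcase, hM]
        refine (hup lam sp hlam0 hlamM).trans ?_
        apply ENNReal.ofReal_le_ofReal
        apply hexpmono
        have heq : (3/4) * lam^2 * M * μ - lam * sp = -(sp^2) / (3 * M * μ) := by
          rw [hlamdef]
          field_simp
          ring
        rw [heq, div_le_div_iff₀ (by positivity) (by positivity)]
        have hsp2 : 4 * μ * τ^2 ≤ sp^2 := by
          rw [hspdef]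
          nlinarith [hy2, mul_nonneg (mul_nonneg hy0 hτpos.le) (sq_nonneg τ),
            sq_nonneg (τ^2)]
        rw [hMdef]
        nlinarith [mul_le_mul_of_nonneg_left hsp2 (by positivity : (0:ℝ) ≤ 8 * a^2),
          mul_nonneg (mul_nonneg (sq_nonneg a) hμ0) (sq_nonneg τ)]
      · push_neg at hcase
        have hlamM : (1/M) * M ≤ 1 := by field_simp; norm_num
        refine (hup (1/M) sp (by positivity) hlamM).trans ?_
        apply ENNReal.ofReal_le_ofReal
        apply hexpmono
        have heq : (3/4) * (1/M)^2 * M * μ - (1/M) * sp = ((3/4) * μ - sp) / M := by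
          field_simp
        rw [heq, div_le_div_iff₀ (by positivity) (by positivity)]
        have hspτ : τ^2 ≤ sp := by rw [hspdef]; nlinarith [hy0, hτpos]
        rw [hMdef]
        nlinarith [mul_le_mul_of_nonneg_right hcase.le (sq_nonneg a),
          mul_le_mul_of_nonneg_right hspτ (sq_nonneg a)]
    have hlowfinal : P {ω | S ω ≤ μ - sm} ≤
        ENNReal.ofReal (Real.exp (-t^2 / (8 * a^2))) := by
      set lam : ℝ := sm / (M * μ) with hlamdef
      have hsm0 : 0 ≤ sm := by rw [hsmdef]; positivity
      have hlam0 : 0 ≤ lam := by rw [hlamdef]; positivity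
      refine (hlow lam (μ - sm) hlam0).trans ?_
      apply ENNReal.ofReal_le_ofReal
      apply hexpmono
      have heq : lam * (μ - sm) - lam * μ + lam^2 * M * μ / 2
          = -(sm^2) / (2 * M * μ) := by
        rw [hlamdef]
        field_simp
        ring
      rw [heq, div_le_div_iff₀ (by positivity) (by positivity)]
      have hsm2 : sm^2 = τ^2 * μ := by rw [hsmdef, mul_pow, hy2]
      nlinarith [hsm2, hμpos, hM]
    calc P {ω | τ < |frob (hadB (B ω) A) - Real.sqrt p * frob A|}
        ≤ P ({ω | μ + sp ≤ S ω} ∪ {ω | S ω ≤ μ - sm}) := measure_mono hincl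
      _ ≤ P {ω | μ + sp ≤ S ω} + P {ω | S ω ≤ μ - sm} := measure_union_le _ _
      _ ≤ ENNReal.ofReal (Real.exp (-t^2 / (8 * a^2))) +
            ENNReal.ofReal (Real.exp (-t^2 / (8 * a^2))) :=
          add_le_add hupfinal hlowfinal
      _ ≤ ENNReal.ofReal (4 * Real.exp (-t^2 / (8 * a^2))) := by
          rw [← ENNReal.ofReal_add (Real.exp_pos _).le (Real.exp_pos _).le]
          apply ENNReal.ofReal_le_ofReal
          nlinarith [Real.exp_pos (-t^2 / (8 * a^2))]
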